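/- If a = −π²/2, then every λ ∈ Λ_a satisfies Re(λ) ≤ 0, the purely imaginary numbers iπ and −iπ belong to Λ_a (so v0(a) = 0), and the real number 0 does not belong to Λ_a. -/

import Mathlib

open MeasureTheory Real

/-- The characteristic function `h_a(λ) = λ − a ∫_{−1}^0 e^{λu} du`. -/
noncomputable def charFn (a : ℝ) (lam : ℂ) : ℂ :=
  lam - a * ∫ u in (-1:ℝ)..0, Complex.exp (lam * u)

/-- The set `Λ_a` of complex solutions of the characteristic equation. -/
def charRoots (a : ℝ) : Set ℂ := {lam | charFn a lam = 0}

/-- `v₀(a) = sup{Re λ : λ ∈ Λ_a}`. -/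
noncomputable def v0 (a : ℝ) : ℝ := sSup (Complex.re '' charRoots a)

lemma charFn_zero_iff (a : ℝ) (lam : ℂ) (h : lam ≠ 0) :
    charFn a lam = 0 ↔ lam ^ 2 = a * (1 - Complex.exp (-lam)) := by
  unfold charFn
  rw [integral_exp_mul_complex h]
  push_cast
  rw [mul_zero, Complex.exp_zero, mul_neg_one]
  rw [sub_eq_zero, ← mul_div_assoc, eq_div_iff h]
  constructor <;> intro hh <;> linear_combination hh

lemma re_nonpos (a : ℝ) (ha : a = -(π ^ 2) / 2) (lam : ℂ) (hl : lam ∈ charRoots a) :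
    lam.re ≤ 0 := by
  by_contra hx'
  push_neg at hx'
  have h : lam ≠ 0 := fun h0 => by simp [h0] at hx'
  have heq := (charFn_zero_iff a lam h).mp hl
  have hexplt : rexp (-lam.re) < 1 := Real.exp_lt_one_iff.mpr (by linarith)
  have h1 : ‖1 - Complex.exp (-lam)‖ ≤ 1 + rexp (-lam.re) := by
    simpa [Complex.norm_exp] using norm_sub_le (1 : ℂ) (Complex.exp (-lam))
  have h2 : ‖lam ^ 2‖ ≤ π ^ 2 / 2 * (1 + rexp (-lam.re)) := by
    rw [heq, norm_mul, Complex.norm_real, Real.norm_eq_abs, ha]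
    have habs2 : |(-(π ^ 2) / 2 : ℝ)| = π ^ 2 / 2 := by
      rw [abs_of_nonpos (by nlinarith [Real.pi_pos])]; ring
    rw [habs2]
    gcongr
  have habs : ‖lam ^ 2‖ = lam.re ^ 2 + lam.im ^ 2 := by
    rw [norm_pow, Complex.sq_norm, Complex.normSq_apply]; ring
  have h3 : lam.re ^ 2 + lam.im ^ 2 < π ^ 2 := by
    have hπ2 : (0:ℝ) < π ^ 2 := by positivity
    rw [← habs]; nlinarith [hπ2]
  have him := congrArg Complex.im heq
  simp [pow_two, Complex.mul_im, Complex.exp_im] at him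
  rcases eq_or_ne lam.im 0 with hy | hy
  · have hre := congrArg Complex.re heq
    simp [pow_two, Complex.mul_re, Complex.exp_re, Complex.exp_im, hy] at hre
    nlinarith [Real.pi_pos]
  · have hylt : lam.im < π := by nlinarith [Real.pi_pos]
    have hygt : -π < lam.im := by nlinarith [Real.pi_pos]
    have hsin : 0 < lam.im * Real.sin lam.im := by
      rcases lt_or_gt_of_ne hy with hneg | hpos
      · have : 0 < Real.sin (-lam.im) :=
          Real.sin_pos_of_pos_of_lt_pi (by linarith) (by linarith)
        rw [Real.sin_neg] at this
        exact mul_pos_of_neg_of_neg hneg (by linarith)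
      · exact mul_pos hpos (Real.sin_pos_of_pos_of_lt_pi hpos hylt)
    have hmul : (lam.re * lam.im + lam.im * lam.re) * lam.im
        = a * (rexp (-lam.re) * Real.sin lam.im) * lam.im := by rw [him]
    have hpos : 0 < rexp (-lam.re) * (lam.im * Real.sin lam.im) :=
      mul_pos (Real.exp_pos _) hsin
    have hy2 : 0 < lam.im ^ 2 := pow_pos (abs_pos.mpr hy) 2 |>.trans_eq (by rw [sq_abs])
    nlinarith [Real.pi_pos]

/-- If `a = −π²/2` then every root has nonpositive real part, `±iπ` are roots
(so `v₀(a) = 0`), and `0 ∉ Λ_a`. -/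
theorem charRoots_at_critical (a : ℝ) (ha : a = -(π ^ 2) / 2) :
    (∀ lam ∈ charRoots a, lam.re ≤ 0) ∧
    ((π : ℂ) * Complex.I ∈ charRoots a) ∧
    (-((π : ℂ) * Complex.I) ∈ charRoots a) ∧
    v0 a = 0 ∧
    (0 : ℂ) ∉ charRoots a := by
  have hπ : ((π : ℂ) * Complex.I) ≠ 0 :=
    mul_ne_zero (Complex.ofReal_ne_zero.mpr Real.pi_ne_zero) Complex.I_ne_zero
  have hmem : (π : ℂ) * Complex.I ∈ charRoots a := by
    show charFn a _ = 0
    rw [charFn_zero_iff a _ hπ]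
    have hexp : Complex.exp (-(↑π * Complex.I)) = -1 := by
      rw [Complex.exp_neg, Complex.exp_pi_mul_I]; norm_num
    rw [hexp, ha]
    push_cast
    linear_combination ((π : ℂ) ^ 2) * Complex.I_sq
  have hmem' : -((π : ℂ) * Complex.I) ∈ charRoots a := by
    show charFn a _ = 0
    rw [charFn_zero_iff a _ (neg_ne_zero.mpr hπ)]
    have hexp : Complex.exp (-(-(↑π * Complex.I))) = -1 := by
      rw [neg_neg, Complex.exp_pi_mul_I]
    rw [hexp, ha]
    push_cast
    linear_combination ((π : ℂ) ^ 2) * Complex.I_sq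
  have hre0 : ((π : ℂ) * Complex.I).re = 0 := by simp
  refine ⟨fun lam hl => re_nonpos a ha lam hl, hmem, hmem', ?_, ?_⟩
  · apply le_antisymm
    · exact csSup_le ⟨0, ⟨_, hmem, hre0⟩⟩
        (by rintro x ⟨lam, hl, rfl⟩; exact re_nonpos a ha lam hl)
    · exact le_csSup ⟨0, by rintro x ⟨lam, hl, rfl⟩; exact re_nonpos a ha lam hl⟩
        ⟨_, hmem, hre0⟩
  · intro h0
    have : charFn a 0 = 0 := h0
    unfold charFn at this
    simp at this
    rw [ha] at this
    nlinarith [Real.pi_pos]
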